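/- arXiv:2310.03564 — 2 statements merged into one kernel-verified Lean document; each statement's English description precedes it below -/
import Mathlib

section
/- Define the sequence f in the nc Hardy space weighting by c_α = 1/(k+1) when α = 1^k (the word repeating generator 1 exactly k times) and c_α = 0 otherwise. Then ∑_α (|α|!/α!)|c_α|² = ∑_{k≥0} 1/(k+1)² < ∞, but the shifted coefficients c'_α defined by c'_{2·1^k} = 1/(k+1) (word: generator 2 followed by k copies of generator 1) and c'_α = 0 otherwise satisfy ∑_α (|α|!/α!)|c'_α|² = ∑_{k≥0} (k+1)!/(1!·k!) · 1/(k+1)² = ∑_{k≥0} 1/(k+1) = ∞. -/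
/-- The weight `|α|!/α!` of a word `α` in the free monoid on two generators `0` ("Z₁")
and `1` ("Z₂"). -/
noncomputable def ncWeight (α : List (Fin 2)) : ℝ :=
  (α.length.factorial : ℝ) / ∏ j : Fin 2, ((α.count j).factorial : ℝ)

/-- The coefficient sequence of `f = ∑_k (1/(k+1)) Z₁^k`: `c α = 1/(k+1)` when
`α = 1^k` (i.e. `α` is `k` copies of generator `0`), and `0` otherwise. -/
noncomputable def cf (α : List (Fin 2)) : ℝ :=
  if α = List.replicate α.length (0 : Fin 2) then 1 / (α.length + 1) else 0

/-- The coefficient sequence of `Z₂ f`: `c' α = 1/(k+1)` when `α = 2·1^k`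
(generator `1` followed by `k` copies of generator `0`), and `0` otherwise. -/
noncomputable def cf' (α : List (Fin 2)) : ℝ :=
  if α = (1 : Fin 2) :: List.replicate (α.length - 1) (0 : Fin 2) then 1 / (α.length : ℝ)
  else 0

lemma count_replicate_fin (k : ℕ) (j : Fin 2) :
    (List.replicate k (0 : Fin 2)).count j = if j = 0 then k else 0 := by
  simp [List.count_replicate]
  split <;> simp_all [eq_comm]

lemma weight_rep (k : ℕ) : ncWeight (List.replicate k (0 : Fin 2)) = 1 := by
  rw [ncWeight]
  rw [Fin.prod_univ_two]
  simp [count_replicate_fin]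
  exact Nat.factorial_ne_zero k

lemma weight_rep' (k : ℕ) : ncWeight ((1 : Fin 2) :: List.replicate k (0 : Fin 2)) = k + 1 := by
  rw [ncWeight]
  rw [Fin.prod_univ_two]
  have h0 : ((1 : Fin 2) :: List.replicate k (0 : Fin 2)).count (0 : Fin 2) = k := by
    simp [List.count_cons, count_replicate_fin]
  have h1 : ((1 : Fin 2) :: List.replicate k (0 : Fin 2)).count (1 : Fin 2) = 1 := by
    simp [List.count_cons, count_replicate_fin]
  rw [h0, h1]
  have hk : (k.factorial:ℝ) ≠ 0 := by positivity
  field_simp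
  push_cast [List.length_cons, List.length_replicate, Nat.factorial_succ]
  ring

/-- `∑_α (|α|!/α!)|c_α|² = ∑_k 1/(k+1)² < ∞`, but the shifted coefficients satisfy
`∑_α (|α|!/α!)|c'_α|² = ∑_k 1/(k+1) = ∞`; so multiplication by `Z₂` is not defined on
the nc Hardy space. -/
theorem stmt5 :
    (Summable fun α : List (Fin 2) => ncWeight α * cf α ^ 2) ∧
    ((∑' α : List (Fin 2), ncWeight α * cf α ^ 2) = ∑' k : ℕ, (1 : ℝ) / (k + 1) ^ 2) ∧
    ¬ Summable (fun α : List (Fin 2) => ncWeight α * cf' α ^ 2) := by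
  set e : ℕ → List (Fin 2) := fun k => List.replicate k (0 : Fin 2) with he
  set e' : ℕ → List (Fin 2) := fun k => (1 : Fin 2) :: List.replicate k (0 : Fin 2) with he'
  have hinj : Function.Injective e := fun a b h => by
    simp only [he] at h; simpa using congrArg List.length h
  have hinj' : Function.Injective e' := fun a b h => by
    simp only [he'] at h; simpa using congrArg List.length h
  have hsupp : Function.support (fun α : List (Fin 2) => ncWeight α * cf α ^ 2) ⊆ Set.range e := by
    intro α hα
    simp only [Function.mem_support] at hα
    by_contra h
    apply hα
    have : cf α = 0 := by
      rw [cf, if_neg]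
      intro hc
      exact h ⟨α.length, hc.symm⟩
    simp [this]
  have hsupp' : Function.support (fun α : List (Fin 2) => ncWeight α * cf' α ^ 2) ⊆ Set.range e' := by
    intro α hα
    simp only [Function.mem_support] at hα
    by_contra h
    apply hα
    have : cf' α = 0 := by
      rw [cf', if_neg]
      intro hc
      exact h ⟨α.length - 1, hc.symm⟩
    simp [this]
  have hval : ∀ k : ℕ, ncWeight (e k) * cf (e k) ^ 2 = 1 / ((k : ℝ) + 1) ^ 2 := by
    intro k
    have : cf (e k) = 1 / ((k : ℝ) + 1) := by
      rw [cf, if_pos (by simp [he])]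
      simp [he]
    rw [this, weight_rep, one_mul, div_pow, one_pow]
  have hval' : ∀ k : ℕ, ncWeight (e' k) * cf' (e' k) ^ 2 = 1 / ((k : ℝ) + 1) := by
    intro k
    have : cf' (e' k) = 1 / ((k : ℝ) + 1) := by
      rw [cf', if_pos (by simp [he'])]
      simp only [he', List.length_cons, List.length_replicate]
      push_cast
      ring_nf
    rw [this, weight_rep']
    field_simp
  have hsum : Summable fun k : ℕ => (1 : ℝ) / ((k : ℝ) + 1) ^ 2 := by
    have := Real.summable_one_div_nat_pow.mpr (show 1 < 2 by norm_num)
    have h2 := (summable_nat_add_iff 1).mpr this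
    convert h2 using 2 with k
    · rfl
    push_cast
    ring
  refine ⟨?_, ?_, ?_⟩
  · rw [← hinj.summable_iff (by intro x hx; by_contra hc; exact hx (hsupp hc))]
    exact hsum.congr fun k => (hval k).symm
  · rw [← hinj.tsum_eq hsupp]
    exact tsum_congr fun k => hval k
  · intro hS
    have := (hinj'.summable_iff (by intro x hx; by_contra hc; exact hx (hsupp' hc))).mpr hS
    have h2 : Summable fun k : ℕ => (1 : ℝ) / ((k : ℝ) + 1) := this.congr fun k => hval' k
    have h3 : Summable fun k : ℕ => (1 : ℝ) / (k : ℝ) := by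
      rw [← summable_nat_add_iff 1] ; push_cast; exact h2
    exact Real.not_summable_one_div_natCast h3
end

section
/- Let E be a Banach space, (F_k)_{k≥0} a sequence in E such that the series S(r) := ∑_{k=0}^∞ r^k F_k converges in norm for every r ∈ [0,1). If J ⊆ E is a closed subspace with S(r) ∈ J for all r ∈ [0,1), then F_k ∈ J for every k ≥ 0. -/
open Filter Finset Topology

/-- Let `E` be a Banach space and `(F_k)` a sequence such that `S(r) = ∑_k r^k F_k`
converges in norm for every `r ∈ [0,1)`. If `J` is a closed subspace containing every
`S(r)`, then every `F_k` lies in `J`. -/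
theorem stmt12 {E : Type} [NormedAddCommGroup E] [NormedSpace ℝ E] [CompleteSpace E]
    (F : ℕ → E)
    (hconv : ∀ r ∈ Set.Ico (0 : ℝ) 1, Summable fun k : ℕ => r ^ k • F k)
    (J : Submodule ℝ E) (hJc : IsClosed (J : Set E))
    (hJ : ∀ r ∈ Set.Ico (0 : ℝ) 1, (∑' k : ℕ, r ^ k • F k) ∈ J) :
    ∀ k, F k ∈ J := by
  -- a geometric bound on the coefficients, from summability at r = 1/2
  obtain ⟨C, hC0, hC⟩ : ∃ C : ℝ, 0 ≤ C ∧ ∀ k, ‖F k‖ ≤ C * 2 ^ k := by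
    have hs := hconv (1/2) ⟨by norm_num, by norm_num⟩
    obtain ⟨C, hCb⟩ := (hs.tendsto_atTop_zero.norm.isBoundedUnder_le).bddAbove_range
    have hC' : ∀ k, ‖F k‖ ≤ C * 2 ^ k := by
      intro k
      have h1 : ‖(1/2 : ℝ) ^ k • F k‖ ≤ C := hCb ⟨k, rfl⟩
      rw [norm_smul, norm_pow, Real.norm_eq_abs] at h1
      have h2 : |(1:ℝ)/2| = ((2:ℝ))⁻¹ := by norm_num
      rw [h2, inv_pow, inv_mul_le_iff₀ (by positivity)] at h1
      linarith [h1]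
    exact ⟨C, le_trans (norm_nonneg (F 0)) (by simpa using hC' 0), hC'⟩
  -- the tail functions
  set g : ℕ → ℝ → E := fun m r => ∑' j : ℕ, r ^ j • F (j + m) with hgdef
  have key : ∀ m : ℕ, ∀ r ∈ Set.Icc (0:ℝ) (1/4),
      ∀ j : ℕ, ‖r ^ j • F (j + m)‖ ≤ (C * 2 ^ m) * (1/2) ^ j := by
    intro m r hr j
    rw [norm_smul, norm_pow, Real.norm_eq_abs, abs_of_nonneg hr.1]
    calc r ^ j * ‖F (j + m)‖ ≤ (1/4) ^ j * (C * 2 ^ (j + m)) := by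
          apply mul_le_mul (pow_le_pow_left₀ hr.1 hr.2 j) (hC _) (norm_nonneg _)
          positivity
      _ = (C * 2 ^ m) * (1/2) ^ j := by
          rw [pow_add, show ((1:ℝ)/2) = (1/4) * 2 by norm_num, mul_pow]; ring
  have hge : Summable (fun j : ℕ => ((1:ℝ)/2) ^ j) :=
    summable_geometric_of_lt_one (by norm_num) (by norm_num)
  have hsum : ∀ m : ℕ, ∀ r ∈ Set.Icc (0:ℝ) (1/4),
      Summable (fun j : ℕ => r ^ j • F (j + m)) :=
    fun m r hr => Summable.of_norm_bounded (hge.mul_left _) (key m r hr)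
  -- uniform bound on the tails
  have hbd : ∀ m : ℕ, ∀ r ∈ Set.Icc (0:ℝ) (1/4), ‖g m r‖ ≤ (C * 2 ^ m) * 2 := by
    intro m r hr
    have hgs : HasSum (fun j : ℕ => (C * 2 ^ m) * (1/2) ^ j) ((C * 2 ^ m) * 2) := by
      have h := (hasSum_geometric_of_lt_one (r := (1:ℝ)/2) (by norm_num) (by norm_num)).mul_left
        (C * 2 ^ m)
      rw [show ((1:ℝ) - 1/2)⁻¹ = 2 by norm_num] at h
      exact h
    exact tsum_of_norm_bounded hgs (key m r hr)
  -- the recursion g m r = F m + r • g (m+1) r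
  have hrec : ∀ m : ℕ, ∀ r ∈ Set.Icc (0:ℝ) (1/4), g m r = F m + r • g (m+1) r := by
    intro m r hr
    have h1 := (hsum m r hr).tsum_eq_zero_add
    simp only [pow_zero, one_smul, zero_add] at h1
    rw [hgdef]
    simp only []
    rw [h1, ← (hsum (m+1) r hr).tsum_const_smul r]
    congr 1
    exact tsum_congr fun j => by
      rw [smul_smul, ← pow_succ', show j + 1 + m = j + (m + 1) from by omega]
  -- membership of tails in J, given earlier coefficients in J
  have hmem : ∀ n : ℕ, (∀ i < n, F i ∈ J) → ∀ r ∈ Set.Ioc (0:ℝ) (1/4), g n r ∈ J := by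
    intro n ih r hr
    have hr' : r ∈ Set.Icc (0:ℝ) (1/4) := ⟨hr.1.le, hr.2⟩
    have hr1 : r ∈ Set.Ico (0:ℝ) 1 := ⟨hr.1.le, by linarith [hr.2]⟩
    have hdec : (∑ i ∈ Finset.range n, r ^ i • F i) + ∑' i : ℕ, r ^ (i + n) • F (i + n)
        = ∑' i : ℕ, r ^ i • F i := (hconv r hr1).sum_add_tsum_nat_add n
    have h2 : ∑' i : ℕ, r ^ (i + n) • F (i + n) = r ^ n • g n r := by
      rw [hgdef]
      simp only []
      rw [← (hsum n r hr').tsum_const_smul (r ^ n)]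
      exact tsum_congr fun i => by rw [smul_smul, ← pow_add, add_comm n i]
    have h3 : (r ^ n) • g n r ∈ J := by
      have hS := hJ r hr1
      have hP : (∑ i ∈ Finset.range n, r ^ i • F i) ∈ J :=
        Submodule.sum_mem _ fun i hi => J.smul_mem _ (ih i (Finset.mem_range.mp hi))
      have heq : (r ^ n) • g n r = (∑' i : ℕ, r ^ i • F i) - ∑ i ∈ Finset.range n, r ^ i • F i := by
        rw [← h2, eq_sub_iff_add_eq, add_comm, hdec]
      rw [heq]
      exact Submodule.sub_mem _ hS hP
    have heq2 : g n r = (r ^ n)⁻¹ • ((r ^ n) • g n r) := by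
      rw [smul_smul, inv_mul_cancel₀ (pow_ne_zero _ (ne_of_gt hr.1)), one_smul]
    rw [heq2]
    exact J.smul_mem _ h3
  -- main induction
  intro k
  induction k using Nat.strong_induction_on with
  | _ n ih =>
    set u : ℕ → ℝ := fun m => (1/4) * (1 / (m + 1)) with hu
    have hu0 : ∀ m : ℕ, u m ∈ Set.Ioc (0:ℝ) (1/4) := by
      intro m
      constructor
      · have : (0:ℝ) < (m:ℝ) + 1 := by positivity
        rw [hu]; positivity
      · rw [hu]
        simp only []
        rw [mul_one_div, div_le_iff₀ (by positivity)]
        nlinarith [(m.cast_nonneg : (0:ℝ) ≤ m)]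
    have hulim : Tendsto u atTop (𝓝 0) := by
      have h := tendsto_one_div_add_atTop_nhds_zero_nat.const_mul ((1:ℝ)/4)
      simpa [hu, one_div] using h
    have hglim : Tendsto (fun m => g n (u m)) atTop (𝓝 (F n)) := by
      rw [tendsto_iff_norm_sub_tendsto_zero]
      have hb : ∀ m : ℕ, ‖g n (u m) - F n‖ ≤ (C * 2 ^ (n+1) * 2) * u m := by
        intro m
        have hIcc : u m ∈ Set.Icc (0:ℝ) (1/4) := ⟨(hu0 m).1.le, (hu0 m).2⟩
        rw [hrec n (u m) hIcc, add_sub_cancel_left, norm_smul, Real.norm_eq_abs,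
          abs_of_nonneg (hu0 m).1.le, mul_comm]
        exact mul_le_mul_of_nonneg_right (hbd (n+1) (u m) hIcc) (hu0 m).1.le
      have h0 : Tendsto (fun m => (C * 2 ^ (n+1) * 2) * u m) atTop (𝓝 0) := by
        simpa [hu, one_div] using hulim.const_mul (C * 2 ^ (n+1) * 2)
      exact squeeze_zero (fun m => norm_nonneg _) hb h0
    exact hJc.mem_of_tendsto hglim (Eventually.of_forall fun m => hmem n ih (u m) (hu0 m))
end
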